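/- arXiv:1309.1319 — 2 statements merged into one kernel-verified Lean document; each statement's English description precedes it below -/
import Mathlib

section
/- Let α be a primitive element of GF(2^L) with minimal polynomial of degree L, let p satisfy α^{p+1} = α^p + 1, and expand α^p in the basis {1, α, ..., α^{L-1}} as α^p = Σ_{j=0}^{L-1} c_j α^j. Then c_{L-1} ≠ 0, i.e., the coefficient of α^{L-1} in the basis expansion of α^p is 1. -/
/-- Expanding α^p (with α^{p+1} = α^p + 1) in the basis {1, α, ..., α^{L-1}},
the coefficient of α^{L-1} is 1. -/
theorem stmt5 {F : Type*} [Field F] [Fintype F] [CharP F 2] [Algebra (ZMod 2) F] (L : ℕ)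
    (hL : 2 ≤ L) (hcard : Fintype.card F = 2 ^ L) (α : F) (hα : orderOf α = 2 ^ L - 1)
    (hbasis : LinearIndependent (ZMod 2) fun j : Fin L => α ^ (j : ℕ))
    (p : ℕ) (hp : α ^ (p + 1) = α ^ p + 1)
    (c : Fin L → ZMod 2) (hc : α ^ p = ∑ j : Fin L, c j • α ^ (j : ℕ)) :
    c ⟨L - 1, by omega⟩ = 1 := by
  have hL1 : L - 1 < L := by omega
  by_contra hne
  have h0 : c ⟨L - 1, hL1⟩ = 0 := by
    have h01 : c ⟨L - 1, hL1⟩ = 0 ∨ c ⟨L - 1, hL1⟩ = 1 := by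
      generalize c ⟨L - 1, hL1⟩ = x
      revert x; decide
    rcases h01 with h | h
    · exact h
    · exact absurd h hne
  set C : ℕ → ZMod 2 := fun n => if h : n < L then c ⟨n, h⟩ else 0 with hC
  have hc' : α ^ p = ∑ n ∈ Finset.range L, C n • α ^ n := by
    rw [hc, ← Fin.sum_univ_eq_sum_range (fun n => C n • α ^ n) L]
    refine Finset.sum_congr rfl fun j _ => ?_
    simp [hC, j.isLt]
  have hC0 : C (L - 1) = 0 := by simp [hC, hL1, h0]
  have hp1 : α ^ (p + 1) = ∑ n ∈ Finset.range (L - 1), C n • α ^ (n + 1) := by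
    have : α ^ (p + 1) = (∑ n ∈ Finset.range L, C n • α ^ n) * α := by
      rw [← hc', pow_succ]
    rw [this, Finset.sum_mul]
    have hrw : ∀ n, (C n • α ^ n) * α = C n • α ^ (n + 1) := by
      intro n; rw [smul_mul_assoc, pow_succ]
    simp only [hrw]
    have hLs : L = (L - 1) + 1 := by omega
    rw [hLs, Finset.sum_range_succ]
    rw [← hLs, hC0, zero_smul, add_zero]
  set D : ℕ → ZMod 2 := fun n => (if n = 0 then 1 else C (n - 1)) + C n with hD
  have hsum : ∑ n ∈ Finset.range L, D n • α ^ n = 0 := by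
    simp only [hD, add_smul, Finset.sum_add_distrib]
    have h2 : ∑ n ∈ Finset.range L, C n • α ^ n = α ^ p := hc'.symm
    have h1 : ∑ n ∈ Finset.range L, (if n = 0 then (1 : ZMod 2) else C (n - 1)) • α ^ n
        = α ^ (p + 1) + 1 := by
      have hLs : L = (L - 1) + 1 := by omega
      rw [hLs, Finset.sum_range_succ']
      simp only [if_pos rfl, Nat.add_sub_cancel, Nat.succ_ne_zero, if_neg (Nat.succ_ne_zero _)]
      rw [hp1]
      simp
    rw [h1, h2, hp]
    have : (2 : F) = 0 := by
      have := CharP.cast_eq_zero F 2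
      simpa using this
    ring_nf
    linear_combination (α ^ p + 1) * this
  have hd : ∀ j : Fin L, D (j : ℕ) = 0 := by
    have := Fintype.linearIndependent_iff.mp hbasis (fun j => D (j : ℕ)) ?_
    · exact this
    · rw [Fin.sum_univ_eq_sum_range (fun n => D n • α ^ n) L]
      exact hsum
  have hall : ∀ n, ∀ hn : n < L, c ⟨n, hn⟩ = 1 := by
    intro n
    induction n with
    | zero =>
      intro hn
      have h := hd ⟨0, hn⟩
      simp only [hD] at h
      have hC0' : C 0 = c ⟨0, hn⟩ := by simp [hC, hn]
      simp only [if_true, if_pos trivial] at h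
      rw [hC0'] at h
      generalize c ⟨0, hn⟩ = x at h
      revert h; revert x; decide
    | succ m ih =>
      intro hn
      have hm : m < L := by omega
      have h := hd ⟨m + 1, hn⟩
      simp only [hD] at h
      rw [if_neg (Nat.succ_ne_zero m)] at h
      have e1 : C (m + 1 - 1) = c ⟨m, hm⟩ := by simp [hC, hm]
      have e2 : C (m + 1) = c ⟨m + 1, hn⟩ := by simp [hC, hn]
      rw [e1, e2, ih hm] at h
      generalize c ⟨m + 1, hn⟩ = x at h
      revert h; revert x; decide
  have := hall (L - 1) hL1
  rw [this] at h0
  exact absurd h0 (by decide)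
end

section
/- Let α be a primitive element of GF(2^L) generated by a primitive polynomial of degree L ≥ 3, let p satisfy α^{p+1} = α^p + 1, and set q = 2p (mod 2^L - 1). Writing α^q and α^{q+1} in the basis {1, α, ..., α^{L-1}} with top coefficients c_{L-1} and c'_{L-1} respectively, one has c_{L-1} + c'_{L-1} = 1 (exactly one of α^q, α^{q+1} has α^{L-1} in its basis expansion). -/
/-- With q = 2p mod (2^L - 1), exactly one of α^q, α^{q+1} has α^{L-1} in its
basis expansion: the top coefficients satisfy c_{L-1} + c'_{L-1} = 1. -/
theorem stmt6 {F : Type*} [Field F] [Fintype F] [CharP F 2] [Algebra (ZMod 2) F] (L : ℕ)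
    (hL : 3 ≤ L) (hcard : Fintype.card F = 2 ^ L) (α : F) (hα : orderOf α = 2 ^ L - 1)
    (hbasis : LinearIndependent (ZMod 2) fun j : Fin L => α ^ (j : ℕ))
    (p : ℕ) (hp : α ^ (p + 1) = α ^ p + 1) (q : ℕ) (hq : q = 2 * p % (2 ^ L - 1))
    (c c' : Fin L → ZMod 2)
    (hc : α ^ q = ∑ j : Fin L, c j • α ^ (j : ℕ))
    (hc' : α ^ (q + 1) = ∑ j : Fin L, c' j • α ^ (j : ℕ)) :
    c ⟨L - 1, by omega⟩ + c' ⟨L - 1, by omega⟩ = 1 := by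
  obtain ⟨M, rfl⟩ : ∃ M, L = M + 1 := ⟨L - 1, by omega⟩
  have hL1 : M < M + 1 := by omega
  have h2F : (1 : F) + 1 = 0 := by
    have := CharP.cast_eq_zero F 2
    push_cast at this
    linear_combination this
  by_contra hcon
  have haux : ∀ a b : ZMod 2, a + b ≠ 1 → a + b = 0 := by decide
  have haux2 : ∀ a : ZMod 2, a + 1 = 0 → a = 1 := by decide
  have hD0 : c ⟨M, hL1⟩ + c' ⟨M, hL1⟩ = 0 := haux _ _ hcon
  -- α^q = α^(2p)
  have hq2 : α ^ q = α ^ (2 * p) := by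
    rw [hq, ← hα, pow_mod_orderOf]
  have h1 : α ^ p + α ^ (p + 1) = 1 := by
    rw [hp]
    linear_combination (α ^ p) * h2F
  have h1' : α ^ p + α ^ p * α = 1 := by rw [← pow_succ]; exact h1
  have key : α ^ p = α ^ q + α ^ (q + 1) := by
    rw [pow_succ, hq2, two_mul, pow_add]
    linear_combination (α ^ p) * h1' +
      (α ^ p - α ^ p * α ^ p - α ^ p * α ^ p * α) * h2F
  set D : ℕ → ZMod 2 := fun k => if h : k < M + 1 then c ⟨k, h⟩ + c' ⟨k, h⟩ else 0 with hDdef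
  have hDL : D M = 0 := by
    simp only [hDdef, dif_pos hL1]
    exact hD0
  have hsumD : α ^ p = ∑ k ∈ Finset.range (M + 1), D k • α ^ k := by
    rw [key, hc, hc', ← Finset.sum_add_distrib,
      ← Fin.sum_univ_eq_sum_range (fun k => D k • α ^ k) (M + 1)]
    apply Finset.sum_congr rfl
    intro j _
    simp only [hDdef, dif_pos j.isLt, Fin.eta, add_smul]
  have hsumD1 : α ^ (p + 1) = ∑ k ∈ Finset.range M, D k • α ^ (k + 1) := by
    rw [pow_succ, hsumD, Finset.sum_mul, Finset.sum_range_succ, hDL]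
    simp [smul_mul_assoc, ← pow_succ]
  set E : ℕ → ZMod 2 := fun k => D k + (if k = 0 then 1 else D (k - 1)) with hEdef
  have hEsum : ∑ j : Fin (M + 1), E (j : ℕ) • α ^ (j : ℕ) = 0 := by
    rw [Fin.sum_univ_eq_sum_range (fun k => E k • α ^ k) (M + 1)]
    have expand : ∑ k ∈ Finset.range (M + 1), E k • α ^ k
        = (∑ k ∈ Finset.range (M + 1), D k • α ^ k)
          + ∑ k ∈ Finset.range (M + 1), (if k = 0 then (1 : ZMod 2) else D (k - 1)) • α ^ k := by
      rw [← Finset.sum_add_distrib]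
      apply Finset.sum_congr rfl
      intro k _
      rw [hEdef, add_smul]
    have split : ∑ k ∈ Finset.range (M + 1), (if k = 0 then (1 : ZMod 2) else D (k - 1)) • α ^ k
        = 1 + ∑ i ∈ Finset.range M, D i • α ^ (i + 1) := by
      rw [Finset.sum_range_succ'
        (fun k => (if k = 0 then (1 : ZMod 2) else D (k - 1)) • α ^ k) M]
      simp [add_comm]
    rw [expand, split, ← hsumD, ← hsumD1]
    linear_combination h1 + h2F
  have hE0 : ∀ j : Fin (M + 1), E (j : ℕ) = 0 :=
    Fintype.linearIndependent_iff.mp hbasis _ hEsum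
  have hDall : ∀ k, k < M + 1 → D k = 1 := by
    intro k
    induction k with
    | zero =>
      intro hk
      have h := hE0 ⟨0, hk⟩
      simp only [hEdef, if_pos rfl] at h
      exact haux2 _ h
    | succ n ih =>
      intro hk
      have h := hE0 ⟨n + 1, hk⟩
      simp only [hEdef, Nat.succ_ne_zero, if_false, Nat.add_sub_cancel] at h
      rw [ih (by omega)] at h
      exact haux2 _ h
  have hfin := hDall M hL1
  rw [hDL] at hfin
  exact absurd hfin (by decide)
end
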